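/- Let Λ ⊆ ℝⁿ be a full-rank lattice with dual lattice Λ*. Then for every real P with 2 ≤ P < ∞, and also for P = ∞, the L_P minimum distances satisfy d_P(Λ) · d_P(Λ*) ≤ n. -/

import Mathlib

/-- The `L_P` minimum distance of a subset of `ℝⁿ`. -/
noncomputable def lpDistR (n : ℕ) (P : ℝ) (S : Set (Fin n → ℝ)) : ℝ :=
  sInf {d : ℝ | ∃ x ∈ S, ∃ y ∈ S, x ≠ y ∧ d = (∑ i, |x i - y i| ^ P) ^ (1 / P)}

/-- The `L_∞` minimum distance of a subset of `ℝⁿ`. -/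
noncomputable def linfDistR (n : ℕ) (S : Set (Fin n → ℝ)) : ℝ :=
  sInf {d : ℝ | ∃ x ∈ S, ∃ y ∈ S, x ≠ y ∧ d = ⨆ i, |x i - y i|}

/-- The dual lattice of a subset of `ℝⁿ`. -/
def dualLattice (n : ℕ) (L : Set (Fin n → ℝ)) : Set (Fin n → ℝ) :=
  {y | ∀ x ∈ L, ∃ k : ℤ, ∑ i, y i * x i = (k : ℝ)}

section Aux

open MeasureTheory Submodule
open scoped ENNReal

/-- Minkowski's theorem applied to a cube: a nonzero lattice point of small sup-norm. -/
lemma cube_point_aux (n : ℕ) (hn : 0 < n) (b : Fin n → Fin n → ℝ)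
    (hb : LinearIndependent ℝ b) (r : ℝ) (hr0 : 0 < r)
    (hr : |(Matrix.of b).det| < r ^ n) :
    ∃ x : Fin n → ℝ, (∃ z : Fin n → ℤ, x = ∑ i, z i • b i) ∧ x ≠ 0 ∧ ∀ i, |x i| ≤ r := by
  have hne : Nonempty (Fin n) := ⟨⟨0, hn⟩⟩
  have hcard : Fintype.card (Fin n) = Module.finrank ℝ (Fin n → ℝ) := by simp
  let B : Module.Basis (Fin n) ℝ (Fin n → ℝ) := basisOfLinearIndependentOfCardEqFinrank hb hcard
  have hBcoe : ⇑B = b := coe_basisOfLinearIndependentOfCardEqFinrank hb hcard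
  set s : Set (Fin n → ℝ) := Set.univ.pi fun _ => Set.Icc (-r) r with hs
  have fund := ZSpan.isAddFundamentalDomain' B volume
  have hvolF : volume (ZSpan.fundamentalDomain B) = ENNReal.ofReal |(Matrix.of b).det| := by
    rw [ZSpan.volume_fundamentalDomain, hBcoe]
  have hvols : volume s = ENNReal.ofReal (2 * r) ^ n := by
    rw [hs, volume_pi_pi]
    simp [Real.volume_Icc]
    ring_nf
    simp [ENNReal.ofReal_mul hr0.le, mul_pow]
  have hsymm : ∀ x ∈ s, -x ∈ s := by
    intro x hx i _
    have := hx i (Set.mem_univ i)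
    simp only [Set.mem_Icc] at this ⊢
    constructor <;> simp <;> linarith [this.1, this.2]
  have hconv : Convex ℝ s := convex_pi fun i _ => convex_Icc _ _
  have hlt : volume (ZSpan.fundamentalDomain B) * 2 ^ Module.finrank ℝ (Fin n → ℝ) < volume s := by
    rw [hvolF, hvols]
    have h1 : (2 : ℝ≥0∞) ^ Module.finrank ℝ (Fin n → ℝ) = ENNReal.ofReal (2 ^ n) := by
      rw [← hcard, ENNReal.ofReal_pow (by norm_num : (0:ℝ) ≤ 2), Fintype.card_fin]
      norm_num
    rw [h1, ← ENNReal.ofReal_mul (abs_nonneg _), ← ENNReal.ofReal_pow (by linarith)]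
    refine (ENNReal.ofReal_lt_ofReal_iff (by positivity)).mpr ?_
    calc |(Matrix.of b).det| * 2 ^ n < r ^ n * 2 ^ n := by
          apply mul_lt_mul_of_pos_right hr (by positivity)
      _ = (2 * r) ^ n := by rw [mul_pow]; ring
  have : Countable (span ℤ (Set.range ⇑B)).toAddSubgroup :=
    inferInstanceAs (Countable (span ℤ (Set.range ⇑B)))
  obtain ⟨x, hx0, hxs⟩ := exists_ne_zero_mem_lattice_of_measure_mul_two_pow_lt_measure
    fund hsymm hconv hlt
  refine ⟨(x : Fin n → ℝ), ?_, ?_, fun i => ?_⟩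
  · have hrg : Set.range ⇑B = Set.range b := by rw [hBcoe]
    have hmem : (x : Fin n → ℝ) ∈ span ℤ (Set.range b) := by
      rw [← hrg]; exact (Submodule.mem_toAddSubgroup _).mp x.2
    obtain ⟨c, hc⟩ := (mem_span_range_iff_exists_fun ℤ).mp hmem
    exact ⟨c, hc.symm⟩
  · intro h
    exact hx0 (Subtype.ext h)
  · have := hxs i (Set.mem_univ i)
    rw [Set.mem_Icc] at this
    exact abs_le.mpr this

/-- The dual lattice of the lattice generated by `b` is the lattice generated by the
columns of `(Matrix.of b)⁻¹`. -/
lemma dual_eq_aux (n : ℕ) (b : Fin n → Fin n → ℝ) (hb : LinearIndependent ℝ b) :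
    dualLattice n {x | ∃ z : Fin n → ℤ, x = ∑ i, z i • b i} =
      {y | ∃ z : Fin n → ℤ, y = ∑ i, z i • (fun j => (Matrix.of b)⁻¹ j i)} := by
  set M : Matrix (Fin n) (Fin n) ℝ := Matrix.of b with hM
  have hMunit : IsUnit M := Matrix.linearIndependent_rows_iff_isUnit.mp hb
  have hdet : IsUnit M.det := (Matrix.isUnit_iff_isUnit_det M).mp hMunit
  ext y
  constructor
  · rintro hy
    have hbmem : ∀ i, (b i) ∈ {x | ∃ z : Fin n → ℤ, x = ∑ i, z i • b i} := by
      intro i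
      refine ⟨fun j => if j = i then 1 else 0, ?_⟩
      rw [Finset.sum_eq_single i]
      · simp
      · intro j _ hj; simp [hj]
      · simp
    choose k hk using fun i => hy (b i) (hbmem i)
    have h1 : M.mulVec y = fun i => (k i : ℝ) := by
      funext i
      simp only [Matrix.mulVec, dotProduct]
      rw [← hk i]
      exact Finset.sum_congr rfl fun t _ => mul_comm _ _
    have h2 : y = M⁻¹.mulVec (fun i => (k i : ℝ)) := by
      rw [← h1, Matrix.mulVec_mulVec, Matrix.nonsing_inv_mul M hdet, Matrix.one_mulVec]
    refine ⟨k, ?_⟩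
    funext j
    rw [h2]
    simp only [Matrix.mulVec, dotProduct, Finset.sum_apply, Pi.smul_apply,
      zsmul_eq_mul]
    exact Finset.sum_congr rfl fun t _ => mul_comm _ _
  · rintro ⟨z, hz⟩ x ⟨w, hw⟩
    refine ⟨∑ i, z i * w i, ?_⟩
    have hy : y = M⁻¹.mulVec (fun i => (z i : ℝ)) := by
      funext t
      rw [hz]
      simp only [Matrix.mulVec, dotProduct, Finset.sum_apply, Pi.smul_apply,
        zsmul_eq_mul]
      exact Finset.sum_congr rfl fun i _ => mul_comm _ _
    have hx : x = M.transpose.mulVec (fun j => (w j : ℝ)) := by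
      funext t
      rw [hw]
      simp only [Matrix.mulVec, dotProduct, Finset.sum_apply, Pi.smul_apply,
        zsmul_eq_mul, Matrix.transpose_apply]
      exact Finset.sum_congr rfl fun j _ => mul_comm _ _
    have : ∑ i, y i * x i = dotProduct y x := rfl
    rw [this, hx, Matrix.dotProduct_mulVec, Matrix.vecMul_transpose, hy,
      Matrix.mulVec_mulVec, Matrix.mul_nonsing_inv M hdet, Matrix.one_mulVec]
    push_cast
    rfl

/-- The lattice set generated by `b` contains `0`. -/
lemma zero_mem_aux (n : ℕ) (b : Fin n → Fin n → ℝ) :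
    (0 : Fin n → ℝ) ∈ {x | ∃ z : Fin n → ℤ, x = ∑ i, z i • b i} :=
  ⟨0, by simp⟩

lemma lpDist_le_aux (n : ℕ) (hn : 0 < n) (b : Fin n → Fin n → ℝ)
    (hb : LinearIndependent ℝ b) {P : ℝ} (hP : 2 ≤ P) (r : ℝ) (hr0 : 0 < r)
    (hr : |(Matrix.of b).det| < r ^ n) :
    lpDistR n P {x | ∃ z : Fin n → ℤ, x = ∑ i, z i • b i} ≤ Real.sqrt n * r := by
  obtain ⟨x, hxz, hx0, hxr⟩ := cube_point_aux n hn b hb r hr0 hr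
  have hP0 : (0:ℝ) < P := lt_of_lt_of_le two_pos hP
  have hbdd : BddBelow {d : ℝ | ∃ u ∈ {x | ∃ z : Fin n → ℤ, x = ∑ i, z i • b i},
      ∃ v ∈ {x | ∃ z : Fin n → ℤ, x = ∑ i, z i • b i}, u ≠ v ∧
        d = (∑ i, |u i - v i| ^ P) ^ (1 / P)} := by
    refine ⟨0, ?_⟩
    rintro d ⟨u, -, v, -, -, rfl⟩
    exact Real.rpow_nonneg (Finset.sum_nonneg fun i _ =>
      Real.rpow_nonneg (abs_nonneg _) _) _
  have hmem : (∑ i, |x i - (0:Fin n → ℝ) i| ^ P) ^ (1 / P) ∈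
      {d : ℝ | ∃ u ∈ {x | ∃ z : Fin n → ℤ, x = ∑ i, z i • b i},
      ∃ v ∈ {x | ∃ z : Fin n → ℤ, x = ∑ i, z i • b i}, u ≠ v ∧
        d = (∑ i, |u i - v i| ^ P) ^ (1 / P)} :=
    ⟨x, hxz, 0, zero_mem_aux n b, hx0, rfl⟩
  refine le_trans (csInf_le hbdd hmem) ?_
  have hsum : (∑ i, |x i - (0:Fin n → ℝ) i| ^ P) ≤ (n : ℝ) * r ^ P := by
    calc (∑ i, |x i - (0:Fin n → ℝ) i| ^ P) ≤ ∑ _i : Fin n, r ^ P := by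
          refine Finset.sum_le_sum fun i _ => ?_
          refine Real.rpow_le_rpow (abs_nonneg _) ?_ hP0.le
          simpa using hxr i
      _ = (n : ℝ) * r ^ P := by
          rw [Finset.sum_const, Finset.card_univ, Fintype.card_fin, nsmul_eq_mul]
  calc (∑ i, |x i - (0:Fin n → ℝ) i| ^ P) ^ (1 / P)
      ≤ ((n : ℝ) * r ^ P) ^ (1 / P) := by
        refine Real.rpow_le_rpow ?_ hsum (by positivity)
        exact Finset.sum_nonneg fun i _ => Real.rpow_nonneg (abs_nonneg _) _
    _ = (n : ℝ) ^ (1 / P) * r := by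
        rw [Real.mul_rpow (by positivity) (Real.rpow_nonneg hr0.le _),
          ← Real.rpow_mul hr0.le, mul_one_div_cancel hP0.ne', Real.rpow_one]
    _ ≤ (n : ℝ) ^ (1 / (2:ℝ)) * r := by
        refine mul_le_mul_of_nonneg_right ?_ hr0.le
        refine Real.rpow_le_rpow_of_exponent_le ?_ ?_
        · exact_mod_cast hn
        · exact one_div_le_one_div_of_le two_pos hP
    _ = Real.sqrt n * r := by rw [Real.sqrt_eq_rpow]

lemma linfDist_le_aux (n : ℕ) (hn : 0 < n) (b : Fin n → Fin n → ℝ)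
    (hb : LinearIndependent ℝ b) (r : ℝ) (hr0 : 0 < r)
    (hr : |(Matrix.of b).det| < r ^ n) :
    linfDistR n {x | ∃ z : Fin n → ℤ, x = ∑ i, z i • b i} ≤ r := by
  obtain ⟨x, hxz, hx0, hxr⟩ := cube_point_aux n hn b hb r hr0 hr
  have hne : Nonempty (Fin n) := ⟨⟨0, hn⟩⟩
  have hbdd : BddBelow {d : ℝ | ∃ u ∈ {x | ∃ z : Fin n → ℤ, x = ∑ i, z i • b i},
      ∃ v ∈ {x | ∃ z : Fin n → ℤ, x = ∑ i, z i • b i}, u ≠ v ∧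
        d = ⨆ i, |u i - v i|} := by
    refine ⟨0, ?_⟩
    rintro d ⟨u, -, v, -, -, rfl⟩
    exact Real.iSup_nonneg fun i => abs_nonneg _
  have hmem : (⨆ i, |x i - (0:Fin n → ℝ) i|) ∈
      {d : ℝ | ∃ u ∈ {x | ∃ z : Fin n → ℤ, x = ∑ i, z i • b i},
      ∃ v ∈ {x | ∃ z : Fin n → ℤ, x = ∑ i, z i • b i}, u ≠ v ∧
        d = ⨆ i, |u i - v i|} :=
    ⟨x, hxz, 0, zero_mem_aux n b, hx0, rfl⟩
  refine le_trans (csInf_le hbdd hmem) ?_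
  refine ciSup_le fun i => ?_
  simpa using hxr i

end Aux

/-- For a full-rank lattice `Λ ⊆ ℝⁿ` and any `2 ≤ P < ∞`, as well as
`P = ∞`, one has `d_P(Λ) · d_P(Λ*) ≤ n`. -/
theorem transference_lp_ge_two (n : ℕ) (b : Fin n → Fin n → ℝ)
    (hb : LinearIndependent ℝ b) (Λ : Set (Fin n → ℝ))
    (hΛ : Λ = {x | ∃ z : Fin n → ℤ, x = ∑ i, z i • b i}) :
    (∀ P : ℝ, 2 ≤ P → lpDistR n P Λ * lpDistR n P (dualLattice n Λ) ≤ n) ∧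
    linfDistR n Λ * linfDistR n (dualLattice n Λ) ≤ n := by
  rcases Nat.eq_zero_or_pos n with hn | hn
  · subst hn
    have hempty : ∀ (S : Set (Fin 0 → ℝ)) (f : (Fin 0 → ℝ) → (Fin 0 → ℝ) → ℝ),
        {d : ℝ | ∃ x ∈ S, ∃ y ∈ S, x ≠ y ∧ d = f x y} = ∅ := by
      intro S f
      rw [Set.eq_empty_iff_forall_notMem]
      rintro d ⟨x, -, y, -, hxy, -⟩
      exact hxy (Subsingleton.elim x y)
    constructor
    · intro P hP
      rw [show lpDistR 0 P Λ = 0 by rw [lpDistR, hempty]; exact Real.sInf_empty]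
      norm_num
    · rw [show linfDistR 0 Λ = 0 by rw [linfDistR, hempty]; exact Real.sInf_empty]
      norm_num
  -- main case
  set M : Matrix (Fin n) (Fin n) ℝ := Matrix.of b with hM
  have hMunit : IsUnit M := Matrix.linearIndependent_rows_iff_isUnit.mp hb
  have hdetne : M.det ≠ 0 :=
    isUnit_iff_ne_zero.mp ((Matrix.isUnit_iff_isUnit_det M).mp hMunit)
  set D : ℝ := |M.det| with hDdef
  have hD : 0 < D := abs_pos.mpr hdetne
  -- the dual basis
  set c : Fin n → Fin n → ℝ := fun i j => M⁻¹ j i with hc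
  have hofc : Matrix.of c = M⁻¹.transpose := rfl
  have hdetinv : M⁻¹.det = M.det⁻¹ := by
    rw [Matrix.det_nonsing_inv, Ring.inverse_eq_inv']
  have hcunit : IsUnit (Matrix.of c) := by
    rw [hofc]
    refine (Matrix.isUnit_iff_isUnit_det _).mpr ?_
    rw [Matrix.det_transpose, hdetinv]
    exact isUnit_iff_ne_zero.mpr (inv_ne_zero hdetne)
  have hcind : LinearIndependent ℝ c := Matrix.linearIndependent_rows_iff_isUnit.mpr hcunit
  have hdetc : |(Matrix.of c).det| = D⁻¹ := by
    rw [hofc, Matrix.det_transpose, hdetinv, abs_inv]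
  have hdual : dualLattice n Λ = {y | ∃ z : Fin n → ℤ, y = ∑ i, z i • c i} := by
    rw [hΛ]; exact dual_eq_aux n b hb
  -- the quantities s and t
  set s : ℝ := D ^ (1 / (n:ℝ)) with hs
  set t : ℝ := D⁻¹ ^ (1 / (n:ℝ)) with ht
  have hnR : (0:ℝ) < n := by exact_mod_cast hn
  have hs0 : 0 < s := Real.rpow_pos_of_pos hD _
  have ht0 : 0 < t := Real.rpow_pos_of_pos (inv_pos.mpr hD) _
  have hsn : s ^ n = D := by
    rw [hs, ← Real.rpow_natCast (D ^ (1/(n:ℝ))) n, ← Real.rpow_mul hD.le,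
      one_div_mul_cancel hnR.ne', Real.rpow_one]
  have htn : t ^ n = D⁻¹ := by
    rw [ht, ← Real.rpow_natCast (D⁻¹ ^ (1/(n:ℝ))) n, ← Real.rpow_mul (inv_nonneg.mpr hD.le),
      one_div_mul_cancel hnR.ne', Real.rpow_one]
  have hst : s * t = 1 := by
    rw [hs, ht, ← Real.mul_rpow hD.le (inv_nonneg.mpr hD.le), mul_inv_cancel₀ hD.ne',
      Real.one_rpow]
  -- determinant bounds for perturbed radii
  have hDles : ∀ ε : ℝ, 0 < ε → |(Matrix.of b).det| < (s + ε) ^ n := by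
    intro ε hε
    have : s ^ n < (s + ε) ^ n :=
      pow_lt_pow_left₀ (lt_add_of_pos_right s hε) hs0.le hn.ne'
    rw [hsn] at this
    exact this
  have hDlet : ∀ ε : ℝ, 0 < ε → |(Matrix.of c).det| < (t + ε) ^ n := by
    intro ε hε
    have : t ^ n < (t + ε) ^ n :=
      pow_lt_pow_left₀ (lt_add_of_pos_right t hε) ht0.le hn.ne'
    rw [htn] at this
    rw [hdetc]
    exact this
  have hsqrt0 : 0 < Real.sqrt n := Real.sqrt_pos.mpr hnR
  constructor
  · intro P hP
    -- bounds on the two minima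
    have hA : lpDistR n P Λ ≤ Real.sqrt n * s := by
      refine le_of_forall_pos_le_add fun ε hε => ?_
      have hε' : 0 < ε / Real.sqrt n := div_pos hε hsqrt0
      have := lpDist_le_aux n hn b hb hP (s + ε / Real.sqrt n) (by positivity)
        (hDles _ hε')
      rw [← hΛ] at this
      calc lpDistR n P Λ ≤ Real.sqrt n * (s + ε / Real.sqrt n) := this
        _ = Real.sqrt n * s + ε := by field_simp
    have hB : lpDistR n P (dualLattice n Λ) ≤ Real.sqrt n * t := by
      refine le_of_forall_pos_le_add fun ε hε => ?_
      have hε' : 0 < ε / Real.sqrt n := div_pos hε hsqrt0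
      have := lpDist_le_aux n hn c hcind hP (t + ε / Real.sqrt n) (by positivity)
        (hDlet _ hε')
      rw [← hdual] at this
      calc lpDistR n P (dualLattice n Λ) ≤ Real.sqrt n * (t + ε / Real.sqrt n) := this
        _ = Real.sqrt n * t + ε := by field_simp
    have hA0 : 0 ≤ lpDistR n P Λ := by
      refine Real.sInf_nonneg ?_
      rintro d ⟨u, -, v, -, -, rfl⟩
      exact Real.rpow_nonneg (Finset.sum_nonneg fun i _ =>
        Real.rpow_nonneg (abs_nonneg _) _) _
    have hB0 : 0 ≤ lpDistR n P (dualLattice n Λ) := by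
      refine Real.sInf_nonneg ?_
      rintro d ⟨u, -, v, -, -, rfl⟩
      exact Real.rpow_nonneg (Finset.sum_nonneg fun i _ =>
        Real.rpow_nonneg (abs_nonneg _) _) _
    calc lpDistR n P Λ * lpDistR n P (dualLattice n Λ)
        ≤ (Real.sqrt n * s) * (Real.sqrt n * t) :=
          mul_le_mul hA hB hB0 (by positivity)
      _ = (Real.sqrt n * Real.sqrt n) * (s * t) := by ring
      _ = (n : ℝ) := by rw [Real.mul_self_sqrt hnR.le, hst, mul_one]
  · have hA : linfDistR n Λ ≤ s := by
      refine le_of_forall_pos_le_add fun ε hε => ?_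
      have := linfDist_le_aux n hn b hb (s + ε) (by positivity) (hDles _ hε)
      rwa [← hΛ] at this
    have hB : linfDistR n (dualLattice n Λ) ≤ t := by
      refine le_of_forall_pos_le_add fun ε hε => ?_
      have := linfDist_le_aux n hn c hcind (t + ε) (by positivity) (hDlet _ hε)
      rwa [← hdual] at this
    have hB0 : 0 ≤ linfDistR n (dualLattice n Λ) := by
      refine Real.sInf_nonneg ?_
      rintro d ⟨u, -, v, -, -, rfl⟩
      exact Real.iSup_nonneg fun i => abs_nonneg _
    calc linfDistR n Λ * linfDistR n (dualLattice n Λ)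
        ≤ s * t := mul_le_mul hA hB hB0 hs0.le
      _ = 1 := hst
      _ ≤ (n : ℝ) := by exact_mod_cast hn
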